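/- The forgetful functor V : AlgKan → AlgQ, which regards an algebraic Kan complex as an algebraic quasi-category by forgetting the distinguished fillers of outer horns (so that U_Q ∘ V = U_A), admits a left adjoint G : AlgQ → AlgKan (groupoidification), and the composite G ∘ F_Q is naturally isomorphic to F_A. -/

import Mathlib

/-!
Common definitions for formalizing "Algebraic models for higher categories"
(T. Nikolaus, arXiv:1003.1342): algebraic Kan complexes, algebraic
quasi-categories, model structures, Quillen equivalences, local presentability,
anodyne maps, the fundamental ∞-groupoid and the reduced geometric realization.
-/

universe w₂ w v₂ v u₂ u

open CategoryTheory CategoryTheory.Limits Simplicial SSet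

namespace AlgebraicModels

/-- The morphisms having the left lifting property against every morphism in `P`. -/
def llp {C : Type u} [Category.{v} C] (P : MorphismProperty C) : MorphismProperty C :=
  fun _ _ f => ∀ ⦃X Y : C⦄ (g : X ⟶ Y), P g → HasLiftingProperty f g

/-- The morphisms having the right lifting property against every morphism in `P`. -/
def rlp {C : Type u} [Category.{v} C] (P : MorphismProperty C) : MorphismProperty C :=
  fun _ _ f => ∀ ⦃X Y : C⦄ (g : X ⟶ Y), P g → HasLiftingProperty g f

/-- The horn inclusions `Λ[n, i] ⟶ Δ[n]`, `n ≥ 1`, `0 ≤ i ≤ n`. -/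
inductive hornInclusions : ∀ ⦃X Y : SSet.{0}⦄, (X ⟶ Y) → Prop where
  | mk (n : ℕ) (hn : 1 ≤ n) (i : Fin (n + 1)) : hornInclusions (Λ[n, i].ι)

/-- The inner horn inclusions `Λ[n, i] ⟶ Δ[n]`, `0 < i < n` (hence `n ≥ 2`). -/
inductive innerHornInclusions : ∀ ⦃X Y : SSet.{0}⦄, (X ⟶ Y) → Prop where
  | mk (n : ℕ) (i : Fin (n + 1)) (h0 : 0 < i.val) (hn : i.val < n) :
      innerHornInclusions (Λ[n, i].ι)

/-- The boundary inclusions `∂Δ[n] ⟶ Δ[n]`. -/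
inductive boundaryInclusions : ∀ ⦃X Y : SSet.{0}⦄, (X ⟶ Y) → Prop where
  | mk (n : ℕ) : boundaryInclusions (∂Δ[n].ι)

/-- Anodyne maps: the weakly saturated class generated by the horn inclusions,
characterized (via the small object argument) as the maps having the left lifting
property against every map with the right lifting property against all horn
inclusions; these are the trivial cofibrations of the Kan–Quillen model structure. -/
def anodyne : MorphismProperty SSet.{0} := llp (rlp (fun _ _ f => hornInclusions f))

/-- Inner anodyne maps: the weakly saturated class generated by the inner horn
inclusions. -/
def innerAnodyne : MorphismProperty SSet.{0} :=
  llp (rlp (fun _ _ f => innerHornInclusions f))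

/-- Kan fibrations: right lifting property against all horn inclusions. -/
def kanFibration : MorphismProperty SSet.{0} := rlp (fun _ _ f => hornInclusions f)

/-- Trivial Kan fibrations: right lifting property against all boundary inclusions. -/
def trivialKanFibration : MorphismProperty SSet.{0} :=
  rlp (fun _ _ f => boundaryInclusions f)

/-- Weak homotopy equivalences of simplicial sets, characterized as the maps
factoring as an anodyne map followed by a trivial Kan fibration (this is exactly the
class of weak equivalences of the Kan–Quillen model structure on `SSet`). -/
def weakHomotopyEquiv : MorphismProperty SSet.{0} := fun X Y f =>
  ∃ (Z : SSet.{0}) (i : X ⟶ Z) (p : Z ⟶ Y), anodyne i ∧ trivialKanFibration p ∧ i ≫ p = f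

/-- An algebraic Kan complex: a simplicial set with a distinguished filler for every
horn `Λ[n, i] ⟶ X`, `n ≥ 1`, `0 ≤ i ≤ n`. -/
structure AlgKan : Type 1 where
  carrier : SSet.{0}
  filler : ∀ ⦃n : ℕ⦄ (i : Fin (n + 1)), 1 ≤ n → ((Λ[n, i] : SSet) ⟶ carrier) → (Δ[n] ⟶ carrier)
  filler_spec : ∀ ⦃n : ℕ⦄ (i : Fin (n + 1)) (hn : 1 ≤ n) (h : (Λ[n, i] : SSet) ⟶ carrier),
    Λ[n, i].ι ≫ filler i hn h = h

namespace AlgKan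

/-- Morphisms of algebraic Kan complexes: simplicial maps preserving the
distinguished fillers. -/
@[ext]
structure Hom (X Y : AlgKan) where
  map : X.carrier ⟶ Y.carrier
  preserves : ∀ ⦃n : ℕ⦄ (i : Fin (n + 1)) (hn : 1 ≤ n) (h : (Λ[n, i] : SSet) ⟶ X.carrier),
    X.filler i hn h ≫ map = Y.filler i hn (h ≫ map)

instance : Category.{0} AlgKan where
  Hom := Hom
  id X := ⟨𝟙 X.carrier, fun n i hn h => by simp⟩
  comp {X Y Z} f g := ⟨f.map ≫ g.map, fun n i hn h => by
    rw [← Category.assoc, f.preserves, g.preserves, Category.assoc]⟩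
  id_comp f := Hom.ext (Category.id_comp f.map)
  comp_id f := Hom.ext (Category.comp_id f.map)
  assoc f g h := Hom.ext (Category.assoc f.map g.map h.map)

@[simp] lemma id_map (X : AlgKan) : Hom.map (𝟙 X) = 𝟙 X.carrier := rfl

@[simp] lemma comp_map {X Y Z : AlgKan} (f : X ⟶ Y) (g : Y ⟶ Z) :
    Hom.map (f ≫ g) = f.map ≫ g.map := rfl

end AlgKan

/-- The forgetful functor from algebraic Kan complexes to simplicial sets. -/
def UA : AlgKan ⥤ SSet.{0} where
  obj X := X.carrier
  map f := f.map

/-- An algebraic quasi-category: a simplicial set with a distinguished filler for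
every inner horn `Λ[n, i] ⟶ X`, `0 < i < n`. -/
structure AlgQ : Type 1 where
  carrier : SSet.{0}
  filler : ∀ ⦃n : ℕ⦄ (i : Fin (n + 1)), 0 < i.val → i.val < n →
    ((Λ[n, i] : SSet) ⟶ carrier) → (Δ[n] ⟶ carrier)
  filler_spec : ∀ ⦃n : ℕ⦄ (i : Fin (n + 1)) (h0 : 0 < i.val) (hn : i.val < n)
    (h : (Λ[n, i] : SSet) ⟶ carrier), Λ[n, i].ι ≫ filler i h0 hn h = h

namespace AlgQ

/-- Morphisms of algebraic quasi-categories: simplicial maps preserving the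
distinguished fillers. -/
@[ext]
structure Hom (X Y : AlgQ) where
  map : X.carrier ⟶ Y.carrier
  preserves : ∀ ⦃n : ℕ⦄ (i : Fin (n + 1)) (h0 : 0 < i.val) (hn : i.val < n)
    (h : (Λ[n, i] : SSet) ⟶ X.carrier),
    X.filler i h0 hn h ≫ map = Y.filler i h0 hn (h ≫ map)

instance : Category.{0} AlgQ where
  Hom := Hom
  id X := ⟨𝟙 X.carrier, fun n i h0 hn h => by simp⟩
  comp {X Y Z} f g := ⟨f.map ≫ g.map, fun n i h0 hn h => by
    rw [← Category.assoc, f.preserves, g.preserves, Category.assoc]⟩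
  id_comp f := Hom.ext (Category.id_comp f.map)
  comp_id f := Hom.ext (Category.comp_id f.map)
  assoc f g h := Hom.ext (Category.assoc f.map g.map h.map)

@[simp] lemma id_map (X : AlgQ) : Hom.map (𝟙 X) = 𝟙 X.carrier := rfl

@[simp] lemma comp_map {X Y Z : AlgQ} (f : X ⟶ Y) (g : Y ⟶ Z) :
    Hom.map (f ≫ g) = f.map ≫ g.map := rfl

end AlgQ

/-- The forgetful functor from algebraic quasi-categories to simplicial sets. -/
def UQ : AlgQ ⥤ SSet.{0} where
  obj X := X.carrier
  map f := f.map

/-- A (closed) model structure on a category: classes of weak equivalences,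
cofibrations and fibrations on a complete and cocomplete category, satisfying
Quillen's axioms (two-out-of-three, closure under retracts, the lifting axioms
and the factorization axioms). -/
structure ModelStructure (C : Type u) [Category.{v} C] where
  weq : MorphismProperty C
  cof : MorphismProperty C
  fib : MorphismProperty C
  hasLimits : HasLimitsOfSize.{v, v} C
  hasColimits : HasColimitsOfSize.{v, v} C
  weq_comp : ∀ ⦃X Y Z : C⦄ (f : X ⟶ Y) (g : Y ⟶ Z), weq f → weq g → weq (f ≫ g)
  weq_of_comp_left : ∀ ⦃X Y Z : C⦄ (f : X ⟶ Y) (g : Y ⟶ Z), weq f → weq (f ≫ g) → weq g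
  weq_of_comp_right : ∀ ⦃X Y Z : C⦄ (f : X ⟶ Y) (g : Y ⟶ Z), weq g → weq (f ≫ g) → weq f
  weq_retract : ∀ ⦃X Y A B : C⦄ (f : X ⟶ Y) (g : A ⟶ B)
    (i : Arrow.mk f ⟶ Arrow.mk g) (r : Arrow.mk g ⟶ Arrow.mk f),
    i ≫ r = 𝟙 (Arrow.mk f) → weq g → weq f
  cof_retract : ∀ ⦃X Y A B : C⦄ (f : X ⟶ Y) (g : A ⟶ B)
    (i : Arrow.mk f ⟶ Arrow.mk g) (r : Arrow.mk g ⟶ Arrow.mk f),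
    i ≫ r = 𝟙 (Arrow.mk f) → cof g → cof f
  fib_retract : ∀ ⦃X Y A B : C⦄ (f : X ⟶ Y) (g : A ⟶ B)
    (i : Arrow.mk f ⟶ Arrow.mk g) (r : Arrow.mk g ⟶ Arrow.mk f),
    i ≫ r = 𝟙 (Arrow.mk f) → fib g → fib f
  lifting_trivCof_fib : ∀ ⦃A B X Y : C⦄ (i : A ⟶ B) (p : X ⟶ Y),
    cof i → weq i → fib p → HasLiftingProperty i p
  lifting_cof_trivFib : ∀ ⦃A B X Y : C⦄ (i : A ⟶ B) (p : X ⟶ Y),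
    cof i → fib p → weq p → HasLiftingProperty i p
  factor_trivCof_fib : ∀ ⦃X Y : C⦄ (f : X ⟶ Y), ∃ (Z : C) (i : X ⟶ Z) (p : Z ⟶ Y),
    cof i ∧ weq i ∧ fib p ∧ i ≫ p = f
  factor_cof_trivFib : ∀ ⦃X Y : C⦄ (f : X ⟶ Y), ∃ (Z : C) (i : X ⟶ Z) (p : Z ⟶ Y),
    cof i ∧ fib p ∧ weq p ∧ i ≫ p = f

namespace ModelStructure

variable {C : Type u} [Category.{v} C] (M : ModelStructure C)

/-- The trivial cofibrations of a model structure. -/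
def trivCof : MorphismProperty C := fun _ _ f => M.cof f ∧ M.weq f

/-- The trivial fibrations of a model structure. -/
def trivFib : MorphismProperty C := fun _ _ f => M.fib f ∧ M.weq f

/-- An object is fibrant iff every morphism from the source of a trivial cofibration
to it extends along the trivial cofibration (equivalently, the map to the terminal
object is a fibration). -/
def IsFibrant (X : C) : Prop :=
  ∀ ⦃A B : C⦄ (i : A ⟶ B), M.cof i → M.weq i → ∀ u : A ⟶ X, ∃ v : B ⟶ X, i ≫ v = u

/-- An object is cofibrant iff every morphism from it lifts through any trivial
fibration (equivalently, the map from the initial object is a cofibration). -/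
def IsCofibrant (X : C) : Prop :=
  ∀ ⦃E B : C⦄ (p : E ⟶ B), M.fib p → M.weq p → ∀ u : X ⟶ B, ∃ v : X ⟶ E, v ≫ p = u

/-- A model structure is cofibrantly generated by a class `I` of generating
cofibrations and a class `J` of generating trivial cofibrations if the cofibrations
are exactly `llp (rlp I)` and the trivial cofibrations are exactly `llp (rlp J)`. -/
def IsCofibrantlyGenerated (I J : MorphismProperty C) : Prop :=
  M.cof = llp (rlp I) ∧ M.trivCof = llp (rlp J)

/-- Right properness: the pullback of a weak equivalence along a fibration is a weak
equivalence. -/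
def RightProper : Prop :=
  ∀ ⦃X Y Z : C⦄ (f : X ⟶ Z) (g : Y ⟶ Z) (c : PullbackCone f g),
    IsLimit c → M.fib f → M.weq g → M.weq c.fst

end ModelStructure

/-- A Quillen adjunction, expressed through its left adjoint: the left adjoint
preserves cofibrations and trivial cofibrations. -/
def IsQuillenAdjunction {C : Type u} [Category.{v} C] {D : Type u₂} [Category.{v₂} D]
    (MC : ModelStructure C) (MD : ModelStructure D) (F : C ⥤ D) : Prop :=
  (∀ ⦃X Y : C⦄ (f : X ⟶ Y), MC.cof f → MD.cof (F.map f)) ∧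
  (∀ ⦃X Y : C⦄ (f : X ⟶ Y), MC.cof f → MC.weq f → MD.cof (F.map f) ∧ MD.weq (F.map f))

/-- A Quillen equivalence: a Quillen adjunction such that for every cofibrant `X` and
every fibrant `Y`, a map `F.obj X ⟶ Y` is a weak equivalence iff its adjunct
`X ⟶ G.obj Y` is a weak equivalence. -/
def IsQuillenEquivalence {C : Type u} [Category.{v} C] {D : Type u₂} [Category.{v₂} D]
    (MC : ModelStructure C) (MD : ModelStructure D)
    (F : C ⥤ D) (G : D ⥤ C) (adj : F ⊣ G) : Prop :=
  IsQuillenAdjunction MC MD F ∧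
  ∀ (X : C) (Y : D), MC.IsCofibrant X → MD.IsFibrant Y →
    ∀ f : F.obj X ⟶ Y, MD.weq f ↔ MC.weq ((adj.homEquiv X Y) f)

/-- A category is `κ`-filtered if every diagram of size `< κ` in it admits a cocone. -/
def IsCardinalFiltered (J : Type v) [Category.{v} J] (κ : Cardinal.{v}) : Prop :=
  ∀ (K : Type v) [Category.{v} K] (F : K ⥤ J),
    Cardinal.mk (Arrow K) < κ → Nonempty (Cocone F)

/-- An object `A` is `κ`-presentable (`κ`-small) if `Hom(A, -)` preserves `κ`-filtered
colimits. -/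
def IsPresentableObj {C : Type u} [Category.{v} C] (κ : Cardinal.{v}) (A : C) : Prop :=
  ∀ (J : Type v) [Category.{v} J], IsCardinalFiltered J κ →
    Nonempty (PreservesColimitsOfShape J (coyoneda.obj (Opposite.op A)))

/-- A category is locally presentable if it is cocomplete and there is a small family
of `κ`-presentable objects (for some regular cardinal `κ`) such that every object is a
`κ`-filtered colimit of objects of this family. -/
def IsLocallyPresentable (C : Type u) [Category.{v} C] : Prop :=
  HasColimitsOfSize.{v, v} C ∧
  ∃ κ : Cardinal.{v}, κ.IsRegular ∧
    ∃ (ι : Type v) (G : ι → C),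
      (∀ i, IsPresentableObj κ (G i)) ∧
      ∀ X : C, ∃ (J : Cat.{v, v}) (_ : IsCardinalFiltered J κ) (D : J ⥤ C) (c : Cocone D),
        (∀ j : J, ∃ i : ι, Nonempty (D.obj j ≅ G i)) ∧
        Nonempty (IsColimit c) ∧ Nonempty (c.pt ≅ X)

/-- The forgetful functor from algebraic Kan complexes to algebraic quasi-categories:
it forgets the distinguished fillers of the outer horns (and keeps those of the inner
horns), so that `V ⋙ UQ = UA`. -/
def V : AlgKan ⥤ AlgQ where
  obj X :=
    { carrier := X.carrier
      filler := fun n i h0 hn h => X.filler i (by omega) h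
      filler_spec := fun n i h0 hn h => X.filler_spec i (by omega) h }
  map {X Y} f :=
    { map := f.map
      preserves := fun n i h0 hn h => f.preserves i (by omega) h }
  map_id X := AlgQ.Hom.ext rfl
  map_comp f g := AlgQ.Hom.ext rfl

namespace Gpd


/-- The property of a simplex of `Δ[n]` of lying in the horn `Λ[n, i]`. -/
def IsHornSimplex {n : ℕ} (i : Fin (n+1)) {m : SimplexCategoryᵒᵖ} (α : Δ[n].obj m) : Prop :=
  Set.range (stdSimplex.asOrderHom α) ∪ {i} ≠ Set.univ

lemma isHornSimplex_map {n : ℕ} {i : Fin (n+1)} {m m' : SimplexCategoryᵒᵖ} (φ : m ⟶ m')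
    {α : Δ[n].obj m} (h : IsHornSimplex i α) : IsHornSimplex i (Δ[n].map φ α) :=
  Λ[n, i].map φ h

lemma horn_pt {n : ℕ} (hn : 1 ≤ n) (i : Fin (n+1)) : Nonempty ((Λ[n, i] : SSet).obj (Opposite.op ⦋0⦌)) := by
  obtain ⟨n, rfl⟩ : ∃ k, n = k + 1 := ⟨n - 1, by omega⟩
  refine ⟨⟨stdSimplex.const _ i _, ?_⟩⟩
  intro hEq
  have : Nontrivial (Fin (n+1+1)) := inferInstance
  obtain ⟨j, hj⟩ := exists_ne i
  have := hEq ▸ Set.mem_univ j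
  simp only [Set.union_singleton, Set.mem_insert_iff, Set.mem_range] at this
  rcases this with h | ⟨l, h⟩
  · exact hj h
  · exact hj (h.symm.trans rfl)


/-! ## Attaching cells along horns -/

open Classical

variable (X₀ : SSet.{0})

/-- A state of the small-object-argument tower. -/
structure TowerState : Type 1 where
  prev : SSet.{0}
  cur : SSet.{0}
  j : prev ⟶ cur
  ι : X₀ ⟶ cur

variable {X₀} (T : TowerState X₀)

/-- The horns of the current stage along which new cells are to be attached. -/
structure Idx : Type where
  n : ℕ
  hn : 1 ≤ n
  i : Fin (n+1)
  H : (Λ[n, i] : SSet) ⟶ T.cur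
  fresh : ¬ ∃ H' : (Λ[n, i] : SSet) ⟶ T.prev, H' ≫ T.j = H
  inn : 0 < i.val → i.val < n → ¬ ∃ h₀ : (Λ[n, i] : SSet) ⟶ X₀, h₀ ≫ T.ι = H

/-- The simplices of the one-step free extension. -/
def AttachObj (m : SimplexCategoryᵒᵖ) : Type :=
  T.cur.obj m ⊕ Σ c : Idx T, {α : Δ[c.n].obj m // ¬ IsHornSimplex c.i α}

/-- Where a simplex of the attached cell `c` lands in the extension. -/
noncomputable def cellApp (c : Idx T) (m : SimplexCategoryᵒᵖ) (α : Δ[c.n].obj m) :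
    AttachObj T m :=
  if h : IsHornSimplex c.i α then .inl (c.H.app m ⟨α, h⟩) else .inr ⟨c, α, h⟩

lemma cellApp_pos {c : Idx T} {m : SimplexCategoryᵒᵖ} {α : Δ[c.n].obj m}
    (h : IsHornSimplex c.i α) : cellApp T c m α = .inl (c.H.app m ⟨α, h⟩) := dif_pos h

lemma cellApp_neg {c : Idx T} {m : SimplexCategoryᵒᵖ} {α : Δ[c.n].obj m}
    (h : ¬ IsHornSimplex c.i α) : cellApp T c m α = .inr ⟨c, α, h⟩ := dif_neg h

/-- Structure maps of the one-step free extension. -/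
noncomputable def attachMap {m m' : SimplexCategoryᵒᵖ} (φ : m ⟶ m') :
    AttachObj T m → AttachObj T m' := fun x => match x with
  | .inl x => .inl (T.cur.map φ x)
  | .inr y => cellApp T y.1 m' (Δ[y.1.n].map φ y.2.1)

lemma attachMap_inl {m m' : SimplexCategoryᵒᵖ} (φ : m ⟶ m') (x : T.cur.obj m) :
    attachMap T φ (.inl x) = .inl (T.cur.map φ x) := rfl

lemma attachMap_inr {m m' : SimplexCategoryᵒᵖ} (φ : m ⟶ m') (c : Idx T)
    (α : Δ[c.n].obj m) (hα : ¬ IsHornSimplex c.i α) :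
    attachMap T φ (.inr ⟨c, α, hα⟩) = cellApp T c m' (Δ[c.n].map φ α) := rfl

lemma attachMap_cellApp {m m' : SimplexCategoryᵒᵖ} (φ : m ⟶ m') (c : Idx T)
    (α : Δ[c.n].obj m) : attachMap T φ (cellApp T c m α) = cellApp T c m' (Δ[c.n].map φ α) := by
  by_cases h : IsHornSimplex c.i α
  · rw [cellApp_pos T h, attachMap_inl, cellApp_pos T (isHornSimplex_map φ h)]
    exact congrArg Sum.inl (ConcreteCategory.congr_hom (c.H.naturality φ) (⟨α, h⟩ : (Λ[c.n, c.i] : SSet).obj m)).symm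
  · rw [cellApp_neg T h, attachMap_inr]

/-- The one-step free extension: attach a cell for every horn in `Idx T`. -/
noncomputable def attach : SSet.{0} where
  obj m := AttachObj T m
  map φ := TypeCat.ofHom (attachMap T φ)
  map_id m := by
    ext x
    cases x with
    | inl y => exact congrArg Sum.inl (ConcreteCategory.congr_hom (T.cur.map_id m) y)
    | inr y =>
      obtain ⟨c, α, hα⟩ := y
      show attachMap T (𝟙 m) (.inr ⟨c, α, hα⟩) = _
      rw [attachMap_inr, FunctorToTypes.map_id_apply, cellApp_neg T hα]
      rfl
  map_comp {m₁ m₂ m₃} φ ψ := by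
    ext x
    cases x with
    | inl y => exact congrArg Sum.inl (ConcreteCategory.congr_hom (T.cur.map_comp φ ψ) y)
    | inr y =>
      obtain ⟨c, α, hα⟩ := y
      show attachMap T (φ ≫ ψ) (.inr ⟨c, α, hα⟩)
          = attachMap T ψ (attachMap T φ (.inr ⟨c, α, hα⟩))
      rw [attachMap_inr, attachMap_inr, attachMap_cellApp, FunctorToTypes.map_comp_apply]

/-- The inclusion of the current stage into the one-step free extension. -/
def attachInl : T.cur ⟶ attach T where
  app m := TypeCat.ofHom Sum.inl
  naturality _ _ _ := rfl

lemma attachInl_app_injective (m : SimplexCategoryᵒᵖ) :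
    Function.Injective ((attachInl T).app m) := fun a b h =>
    Sum.inl.inj (h : (Sum.inl a : AttachObj T m) = Sum.inl b)

/-- The cell attached along the horn `c`. -/
noncomputable def attachCell (c : Idx T) : Δ[c.n] ⟶ attach T where
  app m := TypeCat.ofHom (cellApp T c m)
  naturality {m m'} φ := by
    ext α
    exact (attachMap_cellApp T φ c α).symm

lemma horn_attachCell (c : Idx T) :
    Λ[c.n, c.i].ι ≫ attachCell T c = c.H ≫ attachInl T := by
  ext m α
  exact cellApp_pos T α.2

/-- Extending a morphism over the one-step free extension, given fillers in the target. -/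
noncomputable def attachDesc {B : SSet.{0}} (f : T.cur ⟶ B) (F : ∀ c : Idx T, Δ[c.n] ⟶ B)
    (hF : ∀ c, Λ[c.n, c.i].ι ≫ F c = c.H ≫ f) : attach T ⟶ B where
  app m := TypeCat.ofHom fun x => match x with
    | .inl y => f.app m y
    | .inr y => (F y.1).app m y.2.1
  naturality {m m'} φ := by
    ext x
    cases x with
    | inl y => exact ConcreteCategory.congr_hom (f.naturality φ) y
    | inr y =>
      obtain ⟨c, α, hα⟩ := y
      show (match attachMap T φ (.inr ⟨c, α, hα⟩) with
        | .inl y => f.app m' y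
        | .inr y => (F y.1).app m' y.2.1) = B.map φ ((F c).app m α)
      rw [attachMap_inr, cellApp]
      by_cases h : IsHornSimplex c.i (Δ[c.n].map φ α)
      · erw [dif_pos h]
        have h2 := ConcreteCategory.congr_hom (NatTrans.congr_app (hF c) m') (⟨Δ[c.n].map φ α, h⟩ :
          (Λ[c.n, c.i] : SSet).obj m')
        simp only [NatTrans.comp_app_apply] at h2
        have h1 := ConcreteCategory.congr_hom ((F c).naturality φ) α
        dsimp at h1 ⊢
        rw [← h1]
        exact h2.symm
      · erw [dif_neg h]
        exact ConcreteCategory.congr_hom ((F c).naturality φ) α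

lemma attachInl_desc {B : SSet.{0}} (f : T.cur ⟶ B) (F : ∀ c : Idx T, Δ[c.n] ⟶ B) (hF) :
    attachInl T ≫ attachDesc T f F hF = f := rfl

lemma attachCell_desc {B : SSet.{0}} (f : T.cur ⟶ B) (F : ∀ c : Idx T, Δ[c.n] ⟶ B) (hF)
    (c : Idx T) : attachCell T c ≫ attachDesc T f F hF = F c := by
  ext m α
  show (attachDesc T f F hF).app m (cellApp T c m α) = (F c).app m α
  by_cases h : IsHornSimplex c.i α
  · rw [cellApp_pos T h]
    have h2 := ConcreteCategory.congr_hom (NatTrans.congr_app (hF c) m) (⟨α, h⟩ : (Λ[c.n, c.i] : SSet).obj m)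
    dsimp at h2
    exact h2.symm
  · rw [cellApp_neg T h]
    rfl

lemma attach_hom_ext {B : SSet.{0}} {g₁ g₂ : attach T ⟶ B}
    (h1 : attachInl T ≫ g₁ = attachInl T ≫ g₂)
    (h2 : ∀ c, attachCell T c ≫ g₁ = attachCell T c ≫ g₂) : g₁ = g₂ := by
  ext m x
  cases x with
  | inl y => exact ConcreteCategory.congr_hom (NatTrans.congr_app h1 m) y
  | inr y =>
    obtain ⟨c, α, hα⟩ := y
    have e : (Sum.inr ⟨c, α, hα⟩ : AttachObj T m) = (attachCell T c).app m α :=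
      (cellApp_neg T hα).symm
    rw [e]
    exact ConcreteCategory.congr_hom (NatTrans.congr_app (h2 c) m) α

/-! ## The tower of free extensions -/

/-- The empty simplicial set. -/
def emptySSet : SSet.{0} where
  obj _ := PEmpty
  map _ := TypeCat.ofHom PEmpty.elim
  map_id _ := by ext x; exact x.elim
  map_comp _ _ := by ext x; exact x.elim

/-- The initial tower state. -/
abbrev initState (X₀ : SSet.{0}) : TowerState X₀ where
  prev := emptySSet
  cur := X₀
  j := { app := fun _ => TypeCat.ofHom PEmpty.elim, naturality := by intros; ext x; exact x.elim }
  ι := 𝟙 X₀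

/-- One step of the tower. -/
noncomputable abbrev stepState {X₀ : SSet.{0}} (T : TowerState X₀) : TowerState X₀ where
  prev := T.cur
  cur := attach T
  j := attachInl T
  ι := T.ι ≫ attachInl T

variable (X₀) in
/-- The tower of iterated free extensions. -/
noncomputable abbrev tower : ℕ → TowerState X₀ :=
  fun m => Nat.rec (initState X₀) (fun _ T => stepState T) m

variable (X₀) in
/-- The `m`-th stage of the tower. -/
noncomputable abbrev St (m : ℕ) : SSet.{0} := (tower X₀ m).cur

variable (X₀) in
/-- The transition maps of the tower. -/
noncomputable abbrev jm (m : ℕ) : St X₀ m ⟶ St X₀ (m+1) := (tower X₀ (m+1)).j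

variable (X₀) in
/-- Transition over an inequality of stages. -/
noncomputable def liftT {m m' : ℕ} (h : m ≤ m') : St X₀ m ⟶ St X₀ m' :=
  Nat.leRecOn h (fun {k} f => f ≫ jm X₀ k) (𝟙 _)

lemma liftT_self (m : ℕ) : liftT X₀ (le_refl m) = 𝟙 (St X₀ m) := Nat.leRecOn_self _

lemma liftT_succ {m m' : ℕ} (h : m ≤ m') (h' : m ≤ m' + 1) :
    liftT X₀ h' = liftT X₀ h ≫ jm X₀ m' := Nat.leRecOn_succ h _

lemma liftT_trans {a b c : ℕ} (hab : a ≤ b) (hbc : b ≤ c) :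
    liftT X₀ hab ≫ liftT X₀ hbc = liftT X₀ (hab.trans hbc) := by
  induction c, hbc using Nat.le_induction with
  | base => rw [liftT_self, Category.comp_id]
  | succ c hbc ih =>
    rw [liftT_succ hbc, liftT_succ (hab.trans hbc), ← Category.assoc, ih]

/-! ## The colimit of the tower -/

variable (X₀) in
/-- Elements of the colimit before quotienting. -/
def PreY (k : SimplexCategoryᵒᵖ) : Type := Σ m : ℕ, (St X₀ m).obj k

variable (X₀) in
/-- The relation generating the colimit identifications. -/
def relY (k : SimplexCategoryᵒᵖ) : PreY X₀ k → PreY X₀ k → Prop :=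
  fun a b => b = ⟨a.1 + 1, (jm X₀ a.1).app k a.2⟩

variable (X₀) in
/-- The simplices of the colimit. -/
def Yobj (k : SimplexCategoryᵒᵖ) : Type := Quot (relY X₀ k)

variable (X₀) in
/-- Inclusion of a stage into the colimit, on simplices. -/
def mkY (m : ℕ) (k : SimplexCategoryᵒᵖ) (x : (St X₀ m).obj k) : Yobj X₀ k :=
  Quot.mk _ ⟨m, x⟩

lemma mkY_succ (m : ℕ) (k : SimplexCategoryᵒᵖ) (x : (St X₀ m).obj k) :
    mkY X₀ (m+1) k ((jm X₀ m).app k x) = mkY X₀ m k x :=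
  (@Quot.sound _ (relY X₀ k) ⟨m, x⟩ ⟨m+1, (jm X₀ m).app k x⟩ rfl).symm

lemma mkY_liftT {m m' : ℕ} (h : m ≤ m') (k : SimplexCategoryᵒᵖ) (x : (St X₀ m).obj k) :
    mkY X₀ m' k ((liftT X₀ h).app k x) = mkY X₀ m k x := by
  induction m', h using Nat.le_induction with
  | base => rw [liftT_self]; rfl
  | succ c hbc ih =>
    rw [liftT_succ hbc]
    show mkY X₀ (c+1) k ((jm X₀ c).app k ((liftT X₀ hbc).app k x)) = _
    rw [mkY_succ, ih]

variable (X₀) in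
/-- The colimit of the tower. -/
noncomputable def Ycol : SSet.{0} where
  obj k := Yobj X₀ k
  map {k k'} φ := TypeCat.ofHom <| Quot.lift (fun a : PreY X₀ k => mkY X₀ a.1 k' ((St X₀ a.1).map φ a.2))
    (by
      rintro ⟨m, x⟩ b rfl
      dsimp only
      rw [← NatTrans.naturality_apply, mkY_succ])
  map_id k := by
    ext x
    induction x using Quot.ind with
    | mk a => exact congrArg (mkY X₀ a.1 k) (FunctorToTypes.map_id_apply _ _)
  map_comp {k₁ k₂ k₃} φ ψ := by
    ext x
    induction x using Quot.ind with
    | mk a => exact congrArg (mkY X₀ a.1 k₃) (FunctorToTypes.map_comp_apply _ _ _ _)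

variable (X₀) in
/-- Inclusion of a stage into the colimit. -/
noncomputable def ιY (m : ℕ) : St X₀ m ⟶ Ycol X₀ where
  app k := TypeCat.ofHom (mkY X₀ m k)
  naturality _ _ _ := rfl

lemma jm_ιY (m : ℕ) : jm X₀ m ≫ ιY X₀ (m+1) = ιY X₀ m := by
  ext k x
  exact mkY_succ m k x

lemma liftT_ιY {m m' : ℕ} (h : m ≤ m') : liftT X₀ h ≫ ιY X₀ m' = ιY X₀ m := by
  ext k x
  exact mkY_liftT h k x

lemma relY_eqvGen {k : SimplexCategoryᵒᵖ} {a b : PreY X₀ k}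
    (h : Relation.EqvGen (relY X₀ k) a b) :
    ∃ (N : ℕ) (ha : a.1 ≤ N) (hb : b.1 ≤ N),
      (liftT X₀ ha).app k a.2 = (liftT X₀ hb).app k b.2 := by
  induction h with
  | rel a b hab =>
    subst hab
    refine ⟨a.1 + 1, Nat.le_succ _, le_refl _, ?_⟩
    rw [liftT_succ (le_refl a.1), liftT_self, liftT_self]
    simp only [NatTrans.id_app, Category.id_comp]
    rfl
  | refl a => exact ⟨a.1, le_refl _, le_refl _, rfl⟩
  | symm a b _ ih =>
    obtain ⟨N, ha, hb, e⟩ := ih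
    exact ⟨N, hb, ha, e.symm⟩
  | trans a b c _ _ ih1 ih2 =>
    obtain ⟨N₁, ha1, hb1, e1⟩ := ih1
    obtain ⟨N₂, hb2, hc2, e2⟩ := ih2
    refine ⟨max N₁ N₂, ha1.trans (le_max_left _ _), hc2.trans (le_max_right _ _), ?_⟩
    have q1 : (liftT X₀ (ha1.trans (le_max_left N₁ N₂))).app k a.2
        = (liftT X₀ (hb1.trans (le_max_left N₁ N₂))).app k b.2 := by
      rw [← liftT_trans ha1 (le_max_left N₁ N₂), ← liftT_trans hb1 (le_max_left N₁ N₂)]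
      exact congrArg ((liftT X₀ (le_max_left N₁ N₂)).app k) e1
    have q2 : (liftT X₀ (hb2.trans (le_max_right N₁ N₂))).app k b.2
        = (liftT X₀ (hc2.trans (le_max_right N₁ N₂))).app k c.2 := by
      rw [← liftT_trans hb2 (le_max_right N₁ N₂), ← liftT_trans hc2 (le_max_right N₁ N₂)]
      exact congrArg ((liftT X₀ (le_max_right N₁ N₂)).app k) e2
    exact q1.trans q2

lemma jm_app_injective (m : ℕ) (k : SimplexCategoryᵒᵖ) :
    Function.Injective ((jm X₀ m).app k) := fun a b h =>
    Sum.inl.inj (h : (Sum.inl a : AttachObj (tower X₀ m) k) = Sum.inl b)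

lemma liftT_app_injective {m m' : ℕ} (h : m ≤ m') (k : SimplexCategoryᵒᵖ) :
    Function.Injective ((liftT X₀ h).app k) := by
  induction m', h using Nat.le_induction with
  | base =>
    rw [liftT_self]
    intro x y e
    simpa using e
  | succ c hbc ih =>
    rw [liftT_succ hbc]
    intro x y e
    refine ih ?_
    exact jm_app_injective c k (by simpa using e)

lemma ιY_app_injective (m : ℕ) (k : SimplexCategoryᵒᵖ) :
    Function.Injective ((ιY X₀ m).app k) := by
  intro x y e
  have := relY_eqvGen (Quot.eq.mp (e : Quot.mk (relY X₀ k) ⟨m, x⟩ = Quot.mk _ ⟨m, y⟩))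
  obtain ⟨N, ha, hb, q⟩ := this
  exact liftT_app_injective ha k (by convert q)

lemma ιY_cancel {m : ℕ} {K : SSet.{0}} {f g : K ⟶ St X₀ m}
    (h : f ≫ ιY X₀ m = g ≫ ιY X₀ m) : f = g := by
  ext k x
  exact ιY_app_injective m k (ConcreteCategory.congr_hom (NatTrans.congr_app h k) x)

lemma Y_jointly_surjective (k : SimplexCategoryᵒᵖ) (y : Yobj X₀ k) :
    ∃ (m : ℕ) (x : (St X₀ m).obj k), (ιY X₀ m).app k x = y := by
  induction y using Quot.ind with
  | mk a => exact ⟨a.1, a.2, rfl⟩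

/-- Descending a compatible family of morphisms out of the tower to the colimit. -/
noncomputable def descY {B : SSet.{0}} (g : ∀ m, St X₀ m ⟶ B)
    (hg : ∀ m, jm X₀ m ≫ g (m+1) = g m) : Ycol X₀ ⟶ B where
  app k := TypeCat.ofHom <| Quot.lift (fun a : PreY X₀ k => (g a.1).app k a.2)
    (by
      rintro ⟨m, x⟩ b rfl
      exact (ConcreteCategory.congr_hom (NatTrans.congr_app (hg m) k) x).symm)
  naturality {k k'} φ := by
    ext x
    induction x using Quot.ind with
    | mk a => exact ConcreteCategory.congr_hom ((g a.1).naturality φ) a.2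

lemma ιY_descY {B : SSet.{0}} (g : ∀ m, St X₀ m ⟶ B) (hg) (m : ℕ) :
    ιY X₀ m ≫ descY g hg = g m := rfl

lemma Y_hom_ext {B : SSet.{0}} {f g : Ycol X₀ ⟶ B}
    (h : ∀ m, ιY X₀ m ≫ f = ιY X₀ m ≫ g) : f = g := by
  ext k y
  induction y using Quot.ind with
  | mk a => exact ConcreteCategory.congr_hom (NatTrans.congr_app (h a.1) k) a.2

/-- Maps into the colimit landing levelwise in a stage factor through the stage. -/
lemma factor_through (m : ℕ) {K : SSet.{0}} (h : K ⟶ Ycol X₀)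
    (hh : ∀ (k : SimplexCategoryᵒᵖ) (σ : K.obj k), ∃ x, (ιY X₀ m).app k x = h.app k σ) :
    ∃ h' : K ⟶ St X₀ m, h' ≫ ιY X₀ m = h := by
  refine ⟨{ app := fun k => TypeCat.ofHom fun σ => (hh k σ).choose, naturality := ?_ }, ?_⟩
  · intro k k' φ
    ext σ
    apply ιY_app_injective m k'
    show (ιY X₀ m).app k' ((hh k' (K.map φ σ)).choose) = (ιY X₀ m).app k' ((St X₀ m).map φ _)
    rw [(hh k' (K.map φ σ)).choose_spec, NatTrans.naturality_apply h φ σ,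
      NatTrans.naturality_apply (ιY X₀ m) φ]
    exact congrArg _ (hh k σ).choose_spec.symm
  · ext k σ
    exact (hh k σ).choose_spec

/-- Every horn in the colimit factors through some finite stage. -/
lemma horn_stage {n : ℕ} (hn : 1 ≤ n) (i : Fin (n+1)) (h : (Λ[n, i] : SSet) ⟶ Ycol X₀) :
    ∃ (m : ℕ) (h' : (Λ[n, i] : SSet) ⟶ St X₀ m), h' ≫ ιY X₀ m = h := by
  obtain ⟨n, rfl⟩ : ∃ k, n = k + 1 := ⟨n - 1, by omega⟩
  classical
  let stg : Fin (n+2) → ℕ := fun j =>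
    if hj : j = i then 0
    else (Y_jointly_surjective _ (h.app _ (SSet.horn.face i j hj))).choose
  let m : ℕ := Finset.univ.sup stg
  have hh : ∀ (k : SimplexCategoryᵒᵖ) (σ : (Λ[n+1, i] : SSet).obj k),
      ∃ x, (ιY X₀ m).app k x = h.app k σ := by
    apply Opposite.rec
    apply SimplexCategory.rec
    intro len σ
    obtain ⟨f', hf⟩ := stdSimplex.objEquiv.symm.surjective σ.1
    obtain ⟨j, hji, hfj⟩ : ∃ j, ¬j = i ∧ ∀ l, f'.toOrderHom l ≠ j := by
      obtain ⟨f, hf'⟩ := σ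
      subst hf
      simp [← Set.univ_subset_iff, Set.subset_def, stdSimplex.asOrderHom, SSet.mem_horn_iff, not_or] at hf'
      exact hf'
    have hσ : σ = ((Λ[n+1, i] : SSet).map (SimplexCategory.factor_δ f' j).op)
      (SSet.horn.face i j hji) := by
      apply Subtype.ext
      apply stdSimplex.objEquiv.injective
      rw [← hf]
      exact (SimplexCategory.factor_δ_spec f' j hfj).symm
    obtain ⟨x, hx⟩ :=
      (Y_jointly_surjective _ (h.app _ (SSet.horn.face i j hji))).choose_spec
    have hle : (Y_jointly_surjective _ (h.app _ (SSet.horn.face i j hji))).choose ≤ m := by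
      have e : stg j = (Y_jointly_surjective _
        (h.app _ (SSet.horn.face i j hji))).choose := dif_neg hji
      rw [← e]
      exact Finset.le_sup (Finset.mem_univ j)
    have key : (ιY X₀ m).app _ ((liftT X₀ hle).app _ x)
        = h.app _ (SSet.horn.face i j hji) :=
      (ConcreteCategory.congr_hom (NatTrans.congr_app (liftT_ιY hle) _) x).trans hx
    refine ⟨(St X₀ m).map (SimplexCategory.factor_δ f' j).op ((liftT X₀ hle).app _ x), ?_⟩
    rw [hσ, NatTrans.naturality_apply h,
      NatTrans.naturality_apply (ιY X₀ m), key]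
  obtain ⟨h', e⟩ := factor_through m h hh
  exact ⟨m, h', e⟩



/-! ## The groupoidification of an algebraic quasi-category -/

variable (Q : AlgQ)

/-- The condition under which the distinguished filler comes from `Q` itself:
the horn is inner and factors through the base of the tower. -/
def FromBase {n : ℕ} (i : Fin (n+1)) (H : (Λ[n, i] : SSet) ⟶ Ycol Q.carrier) : Prop :=
  (0 < i.val ∧ i.val < n) ∧ ∃ h₀ : (Λ[n, i] : SSet) ⟶ St Q.carrier 0, h₀ ≫ ιY Q.carrier 0 = H

lemma towerι_ιY (m : ℕ) : (tower Q.carrier m).ι ≫ ιY Q.carrier m = ιY Q.carrier 0 := by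
  induction m with
  | zero => exact Category.id_comp _
  | succ s ih =>
    show ((tower Q.carrier s).ι ≫ jm Q.carrier s) ≫ ιY Q.carrier (s+1) = _
    rw [Category.assoc, jm_ιY, ih]

lemma fresh_min {n : ℕ} (hn : 1 ≤ n) (i : Fin (n+1)) (H : (Λ[n, i] : SSet) ⟶ Ycol Q.carrier) (m : ℕ)
    (H' : (Λ[n, i] : SSet) ⟶ St Q.carrier m) (hH' : H' ≫ ιY Q.carrier m = H)
    (hmin : ∀ s < m, ¬ ∃ h' : (Λ[n, i] : SSet) ⟶ St Q.carrier s, h' ≫ ιY Q.carrier s = H) :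
    ¬ ∃ H'' : (Λ[n, i] : SSet) ⟶ (tower Q.carrier m).prev, H'' ≫ (tower Q.carrier m).j = H' := by
  cases m with
  | zero =>
    rintro ⟨H'', -⟩
    exact (H''.app (Opposite.op ⦋0⦌) (horn_pt hn i).some).elim
  | succ s =>
    rintro ⟨H'', e⟩
    refine hmin s (Nat.lt_succ_self s) ⟨H'', ?_⟩
    rw [← hH', ← e, Category.assoc]
    show H'' ≫ ιY Q.carrier s = H'' ≫ jm Q.carrier s ≫ ιY Q.carrier (s+1)
    rw [jm_ιY]

/-- The attaching data for a designated filler not coming from the base. -/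
noncomputable def mkIdx {n : ℕ} (hn : 1 ≤ n) (i : Fin (n+1)) (H : (Λ[n, i] : SSet) ⟶ Ycol Q.carrier)
    (hc : ¬ FromBase Q i H) :
    Idx (tower Q.carrier (Nat.find (horn_stage hn i H))) where
  n := n
  hn := hn
  i := i
  H := (Nat.find_spec (horn_stage hn i H)).choose
  fresh :=
    fresh_min Q hn i H _ _ (Nat.find_spec (horn_stage hn i H)).choose_spec
      (fun s hs => Nat.find_min (horn_stage hn i H) hs)
  inn := by
    rintro h0 hn' ⟨h₀, e⟩
    refine hc ⟨⟨h0, hn'⟩, h₀, ?_⟩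
    rw [← (Nat.find_spec (horn_stage hn i H)).choose_spec, ← e, Category.assoc, towerι_ιY]

/-- The distinguished filler of a horn in the groupoidification. -/
noncomputable def GFill {n : ℕ} (i : Fin (n+1)) (hn : 1 ≤ n) (H : (Λ[n, i] : SSet) ⟶ Ycol Q.carrier) :
    Δ[n] ⟶ Ycol Q.carrier :=
  if hc : FromBase Q i H then
    Q.filler i hc.1.1 hc.1.2 hc.2.choose ≫ ιY Q.carrier 0
  else
    attachCell (tower Q.carrier (Nat.find (horn_stage hn i H))) (mkIdx Q hn i H hc) ≫
      ιY Q.carrier (Nat.find (horn_stage hn i H) + 1)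

lemma GFill_spec {n : ℕ} (i : Fin (n+1)) (hn : 1 ≤ n) (H : (Λ[n, i] : SSet) ⟶ Ycol Q.carrier) :
    Λ[n, i].ι ≫ GFill Q i hn H = H := by
  rw [GFill]
  split_ifs with hc
  · rw [← Category.assoc]
    have : Λ[n, i].ι ≫ Q.filler i hc.1.1 hc.1.2 hc.2.choose = hc.2.choose :=
      Q.filler_spec i hc.1.1 hc.1.2 hc.2.choose
    rw [this, hc.2.choose_spec]
  · erw [← Category.assoc]
    have hca : Λ[n, i].ι ≫ attachCell (tower Q.carrier (Nat.find (horn_stage hn i H)))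
          (mkIdx Q hn i H hc)
        = (Nat.find_spec (horn_stage hn i H)).choose ≫
          attachInl (tower Q.carrier (Nat.find (horn_stage hn i H))) :=
      horn_attachCell (tower Q.carrier (Nat.find (horn_stage hn i H))) (mkIdx Q hn i H hc)
    rw [hca, Category.assoc]
    show (Nat.find_spec (horn_stage hn i H)).choose ≫
      (jm Q.carrier _ ≫ ιY Q.carrier (Nat.find (horn_stage hn i H) + 1)) = H
    rw [jm_ιY]
    exact (Nat.find_spec (horn_stage hn i H)).choose_spec

/-- The groupoidification of an algebraic quasi-category, as an algebraic Kan complex. -/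
noncomputable def Gobj : AlgKan where
  carrier := Ycol Q.carrier
  filler _ i hn H := GFill Q i hn H
  filler_spec _ i hn H := GFill_spec Q i hn H

lemma unit_preserves {n : ℕ} (i : Fin (n+1)) (h0 : 0 < i.val) (hn' : i.val < n)
    (h : (Λ[n, i] : SSet) ⟶ Q.carrier) :
    Q.filler i h0 hn' h ≫ ιY Q.carrier 0
      = GFill Q i (by omega) ((h ≫ ιY Q.carrier 0 : (Λ[n, i] : SSet) ⟶ Ycol Q.carrier)) := by
  have hc : FromBase Q i (h ≫ ιY Q.carrier 0) := ⟨⟨h0, hn'⟩, h, rfl⟩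
  rw [GFill, dif_pos hc]
  have : hc.2.choose = h := ιY_cancel hc.2.choose_spec
  rw [this]

/-- The attached cells are precisely the designated fillers of their attaching horns. -/
lemma cell_is_filler (m : ℕ) (c : Idx (tower Q.carrier m))
    {n : ℕ} (hn : 1 ≤ n) (i : Fin (n+1)) (H : (Λ[n, i] : SSet) ⟶ Ycol Q.carrier)
    (hcn : c.n = n) (hci : HEq c.i i) (hcH : HEq (c.H ≫ ιY Q.carrier m) H) :
    HEq (attachCell (tower Q.carrier m) c ≫ ιY Q.carrier (m+1)) (GFill Q i hn H) := by
  obtain ⟨cn, chn, ci, cH, cfresh, cinn⟩ := c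
  dsimp at hcn hci hcH
  subst hcn
  have hieq : ci = i := eq_of_heq hci
  subst hieq
  have hH : cH ≫ ιY Q.carrier m = H := eq_of_heq hcH
  have hc : ¬ FromBase Q ci H := by
    rintro ⟨hin, h₀, e⟩
    refine cinn hin.1 hin.2 ⟨h₀, ιY_cancel (m := m) ?_⟩
    rw [Category.assoc, towerι_ιY, e, hH]
  have hfind : Nat.find (horn_stage chn ci H) = m := by
    refine le_antisymm (Nat.find_le ⟨cH, hH⟩) ?_
    by_contra hlt
    push_neg at hlt
    obtain ⟨t, rfl⟩ : ∃ t, m = t + 1 := by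
      cases m with
      | zero => omega
      | succ t => exact ⟨t, rfl⟩
    obtain ⟨H', hH'⟩ := Nat.find_spec (horn_stage chn ci H)
    have hle : Nat.find (horn_stage chn ci H) ≤ t := by omega
    refine cfresh ⟨H' ≫ liftT Q.carrier hle, ?_⟩
    apply ιY_cancel (m := t+1)
    show (H' ≫ liftT Q.carrier hle) ≫ (jm Q.carrier t ≫ ιY Q.carrier (t+1)) = _
    rw [jm_ιY]
    rw [Category.assoc, liftT_ιY, hH', hH]
  subst hfind
  refine heq_of_eq ?_
  rw [GFill, dif_neg hc]
  have hHeq : (Nat.find_spec (horn_stage chn ci H)).choose = cH :=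
    ιY_cancel ((Nat.find_spec (horn_stage chn ci H)).choose_spec.trans hH.symm)
  subst hHeq
  rfl

section Extend

variable (B : AlgKan) (f : Q ⟶ V.obj B)

/-- The extension of a morphism to the stages of the tower, using the fillers of `B`. -/
noncomputable def extFun : ∀ m, St Q.carrier m ⟶ B.carrier := fun m =>
  Nat.rec (motive := fun m => St Q.carrier m ⟶ B.carrier) f.map
    (fun m g => attachDesc (tower Q.carrier m) g
      (fun c => B.filler c.i c.hn (c.H ≫ g))
      (fun c => B.filler_spec c.i c.hn (c.H ≫ g))) m

lemma extFun_succ (m : ℕ) : extFun Q B f (m+1)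
    = attachDesc (tower Q.carrier m) (extFun Q B f m)
      (fun c => B.filler c.i c.hn (c.H ≫ extFun Q B f m))
      (fun c => B.filler_spec c.i c.hn (c.H ≫ extFun Q B f m)) := rfl

lemma jm_extFun (m : ℕ) : jm Q.carrier m ≫ extFun Q B f (m+1) = extFun Q B f m := rfl

/-- The extension of a morphism to the groupoidification. -/
noncomputable def extY : Ycol Q.carrier ⟶ B.carrier :=
  descY (extFun Q B f) (jm_extFun Q B f)

lemma ιY_extY (m : ℕ) : ιY Q.carrier m ≫ extY Q B f = extFun Q B f m := rfl

lemma ext_preserves {n : ℕ} (i : Fin (n+1)) (hn : 1 ≤ n) (H : (Λ[n, i] : SSet) ⟶ Ycol Q.carrier) :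
    GFill Q i hn H ≫ extY Q B f = B.filler i hn (H ≫ extY Q B f) := by
  rw [GFill]
  split_ifs with hc
  · have e0 : ιY Q.carrier 0 ≫ extY Q B f = f.map := rfl
    erw [Category.assoc, e0, f.preserves i hc.1.1 hc.1.2 hc.2.choose]
    have e : hc.2.choose ≫ f.map = H ≫ extY Q B f := by
      conv_rhs => rw [← hc.2.choose_spec]
      rw [Category.assoc, e0]; rfl
    exact congrArg _ e
  · erw [Category.assoc, ιY_extY, extFun_succ, attachCell_desc]
    have e : (Nat.find_spec (horn_stage hn i H)).choose
          ≫ extFun Q B f (Nat.find (horn_stage hn i H))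
        = H ≫ extY Q B f := by
      conv_rhs => rw [← (Nat.find_spec (horn_stage hn i H)).choose_spec]
      rw [Category.assoc, ιY_extY]
    exact congrArg _ e

/-- The extension, as a morphism of algebraic Kan complexes. -/
noncomputable def extHom : Gobj Q ⟶ B where
  map := extY Q B f
  preserves _ i hn H := ext_preserves Q B f i hn H

end Extend

/-- Restriction along the unit. -/
noncomputable def restrHom (B : AlgKan) (g : Gobj Q ⟶ B) : Q ⟶ V.obj B where
  map := ιY Q.carrier 0 ≫ g.map
  preserves n i h0 hn h := by
    erw [← Category.assoc, unit_preserves Q i h0 hn h]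
    exact g.preserves i (by omega) (h ≫ ιY Q.carrier 0)

/-- The adjunction hom-equivalence for the groupoidification. -/
noncomputable def eEquiv (B : AlgKan) : (Gobj Q ⟶ B) ≃ (Q ⟶ V.obj B) where
  toFun := restrHom Q B
  invFun := extHom Q B
  right_inv f := AlgQ.Hom.ext rfl
  left_inv g := by
    refine AlgKan.Hom.ext ?_
    show extY Q B (restrHom Q B g) = g.map
    refine Y_hom_ext (fun m => ?_)
    rw [ιY_extY]
    induction m with
    | zero => rfl
    | succ m ih =>
      have h1 : attachInl (tower Q.carrier m) ≫ extFun Q B (restrHom Q B g) (m+1)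
          = attachInl (tower Q.carrier m) ≫ (ιY Q.carrier (m+1) ≫ g.map) := by
        rw [extFun_succ, attachInl_desc]
        show _ = jm Q.carrier m ≫ ιY Q.carrier (m+1) ≫ g.map
        erw [← Category.assoc, jm_ιY, ← ih]
      have h2 : ∀ c : Idx (tower Q.carrier m),
          attachCell (tower Q.carrier m) c ≫ extFun Q B (restrHom Q B g) (m+1)
          = attachCell (tower Q.carrier m) c ≫ (ιY Q.carrier (m+1) ≫ g.map) := by
        intro c
        rw [extFun_succ, attachCell_desc, ih]
        have e1 : B.filler c.i c.hn (c.H ≫ ιY Q.carrier m ≫ g.map)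
            = B.filler c.i c.hn ((c.H ≫ ιY Q.carrier m) ≫ g.map) := by
          erw [Category.assoc]
        erw [e1, ← g.preserves c.i c.hn (c.H ≫ ιY Q.carrier m)]
        have e2 : (Gobj Q).filler c.i c.hn (c.H ≫ ιY Q.carrier m)
            = attachCell (tower Q.carrier m) c ≫ ιY Q.carrier (m+1) :=
          (eq_of_heq (cell_is_filler Q m c c.hn c.i (c.H ≫ ιY Q.carrier m)
            rfl HEq.rfl HEq.rfl)).symm
        erw [e2, Category.assoc]
      exact attach_hom_ext _ h1 h2

lemma eEquiv_natural (B B' : AlgKan) (g : B ⟶ B') (h : Gobj Q ⟶ B) :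
    eEquiv Q B' (h ≫ g) = eEquiv Q B h ≫ V.map g :=
  AlgQ.Hom.ext (Category.assoc _ _ _).symm

/-- The groupoidification functor. -/
noncomputable def Gfunctor : AlgQ ⥤ AlgKan :=
  Adjunction.leftAdjointOfEquiv (G := V) (F_obj := Gobj) (fun Q B => eEquiv Q B)
    (fun Q B B' g h => eEquiv_natural Q B B' g h)

/-- The groupoidification adjunction. -/
noncomputable def adjGV : Gfunctor ⊣ V :=
  Adjunction.adjunctionOfEquivLeft _ _

end Gpd
/-- The image `{ F.map (∂Δ[n] ⟶ Δ[n]) | n ≥ 1 }` of the boundary inclusions with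
`n ≥ 1` under a functor `F : SSet ⥤ D`. -/
inductive imageBoundaryInclusions {D : Type u} [Category.{v} D] (F : SSet.{0} ⥤ D) :
    ∀ ⦃X Y : D⦄, (X ⟶ Y) → Prop where
  | mk (n : ℕ) (hn : 1 ≤ n) : imageBoundaryInclusions F (F.map (∂Δ[n].ι))

/-- The image `{ F.map (Λ[n, i] ⟶ Δ[n]) | n ≥ 1, 0 ≤ i ≤ n }` of the horn inclusions
under a functor `F : SSet ⥤ D`. -/
inductive imageHornInclusions {D : Type u} [Category.{v} D] (F : SSet.{0} ⥤ D) :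
    ∀ ⦃X Y : D⦄, (X ⟶ Y) → Prop where
  | mk (n : ℕ) (hn : 1 ≤ n) (i : Fin (n + 1)) :
      imageHornInclusions F (F.map (Λ[n, i].ι))

/-- The geometric realizations of the horn inclusions. -/
inductive topHornInclusions : ∀ ⦃X Y : TopCat.{0}⦄, (X ⟶ Y) → Prop where
  | mk (n : ℕ) (hn : 1 ≤ n) (i : Fin (n + 1)) :
      topHornInclusions (SSet.toTop.map (Λ[n, i].ι))

/-- The geometric realizations of the boundary inclusions. -/
inductive topBoundaryInclusions : ∀ ⦃X Y : TopCat.{0}⦄, (X ⟶ Y) → Prop where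
  | mk (n : ℕ) : topBoundaryInclusions (SSet.toTop.map (∂Δ[n].ι))

/-- Serre fibrations: right lifting property against the realized horn inclusions. -/
def serreFibration : MorphismProperty TopCat.{0} := rlp (fun _ _ f => topHornInclusions f)

/-- Trivial Serre fibrations. -/
def topTrivialFibration : MorphismProperty TopCat.{0} :=
  rlp (fun _ _ f => topBoundaryInclusions f)

/-- Trivial cofibrations of the Quillen model structure on `Top`. -/
def topTrivialCofibration : MorphismProperty TopCat.{0} :=
  llp (rlp (fun _ _ f => topHornInclusions f))

/-- Weak homotopy equivalences of topological spaces, characterized as the maps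
factoring as a trivial cofibration followed by a trivial fibration of the Quillen
model structure on `Top`. -/
def topWeakEquiv : MorphismProperty TopCat.{0} := fun X Y f =>
  ∃ (Z : TopCat.{0}) (i : X ⟶ Z) (p : Z ⟶ Y),
    topTrivialCofibration i ∧ topTrivialFibration p ∧ i ≫ p = f

/-- A choice, for every `n ≥ 1` and `0 ≤ i ≤ n`, of a continuous retraction
`R(n,i) : |Δ[n]| ⟶ |Λ[n,i]|` of the inclusion of the geometric horn into the
geometric `n`-simplex. -/
structure HornRetractions where
  r : ∀ (n : ℕ) (i : Fin (n + 1)), 1 ≤ n → (SSet.toTop.obj Δ[n] ⟶ SSet.toTop.obj Λ[n, i])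
  retraction : ∀ (n : ℕ) (i : Fin (n + 1)) (hn : 1 ≤ n),
    SSet.toTop.map (Λ[n, i].ι) ≫ r n i hn = 𝟙 (SSet.toTop.obj Λ[n, i])

/-- The fundamental `∞`-groupoid of a topological space `M`: the singular simplicial
set `Sing M` with the distinguished filler of a horn `h` given by the adjunct of
`(adjunct of h) ∘ R(n,i)`. -/
noncomputable def ASingObj (R : HornRetractions) (M : TopCat.{0}) : AlgKan where
  carrier := TopCat.toSSet.obj M
  filler := fun n i hn h =>
    (sSetTopAdj.homEquiv Δ[n] M) (R.r n i hn ≫ (sSetTopAdj.homEquiv Λ[n, i] M).symm h)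
  filler_spec := fun n i hn h => by
    rw [← Adjunction.homEquiv_naturality_left, ← Category.assoc, R.retraction,
      Category.id_comp, Equiv.apply_symm_apply]

/-- The fundamental `∞`-groupoid functor `ASing : Top ⥤ AlgKan` associated with the
chosen retractions. -/
noncomputable def ASing (R : HornRetractions) : TopCat.{0} ⥤ AlgKan where
  obj M := ASingObj R M
  map {M N} f :=
    { map := TopCat.toSSet.map f
      preserves := fun n i hn h => by
        dsimp [ASingObj]
        erw [← Adjunction.homEquiv_naturality_right, Category.assoc,
          Adjunction.homEquiv_naturality_right_symm] }
  map_id M := AlgKan.Hom.ext (TopCat.toSSet.map_id M)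
  map_comp f g := AlgKan.Hom.ext (TopCat.toSSet.map_comp f g)

/-- The index type of all horns of an algebraic Kan complex. -/
structure HornIndex (X : AlgKan) : Type where
  n : ℕ
  i : Fin (n + 1)
  hn : 1 ≤ n
  h : (Λ[n, i] : SSet) ⟶ X.carrier

/-- The reduced geometric realization of an algebraic Kan complex: the coequalizer,
over all horns `h : Λ[n,i] ⟶ X`, of the realization of the distinguished filler of
`h` against the realization of `h` precomposed with the retraction `R(n,i)`. -/
noncomputable def realReducedObj (R : HornRetractions) (X : AlgKan) : TopCat.{0} :=
  coequalizer
    (Sigma.desc fun k : HornIndex X => SSet.toTop.map (X.filler k.i k.hn k.h))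
    (Sigma.desc fun k : HornIndex X => R.r k.n k.i k.hn ≫ SSet.toTop.map k.h)

/-- The reduced geometric realization functor `|·|_r : AlgKan ⥤ Top`. -/
noncomputable def realReduced (R : HornRetractions) : AlgKan ⥤ TopCat.{0} where
  obj X := realReducedObj R X
  map {X Y} f := coequalizer.desc (SSet.toTop.map f.map ≫ coequalizer.π _ _) (by
    apply Sigma.hom_ext
    intro k
    simp only [colimit.ι_desc_assoc, Cofan.mk_ι_app]
    erw [← Functor.map_comp_assoc, f.preserves k.i k.hn k.h]
    have h2 := Limits.Sigma.ι (fun k : HornIndex Y => SSet.toTop.obj Δ[k.n])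
        (⟨k.n, k.i, k.hn, k.h ≫ f.map⟩ : HornIndex Y) ≫=
      coequalizer.condition
        (Sigma.desc fun k : HornIndex Y => SSet.toTop.map (Y.filler k.i k.hn k.h))
        (Sigma.desc fun k : HornIndex Y => R.r k.n k.i k.hn ≫ SSet.toTop.map k.h)
    simp only [colimit.ι_desc_assoc, Cofan.mk_ι_app] at h2
    simp only [Functor.map_comp, Category.assoc] at h2 ⊢
    exact h2)
  map_id X := by
    dsimp only [realReducedObj]
    apply coequalizer.hom_ext
    simp [realReducedObj]
  map_comp f g := by
    dsimp only [realReducedObj]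
    apply coequalizer.hom_ext
    simp [realReducedObj]
    erw [Cofork.π_ofπ, Category.assoc, coequalizer.π_desc]


/-- The forgetful functor `V : AlgKan ⥤ AlgQ` (with
`V ⋙ U_Q = U_A`) admits a left adjoint `G` (groupoidification), and `G ∘ F_Q` is
naturally isomorphic to `F_A`. -/
theorem groupoidification :
    V ⋙ UQ = UA ∧
    ∃ (G : AlgQ ⥤ AlgKan) (adjGV : G ⊣ V),
      ∀ (FQ : SSet.{0} ⥤ AlgQ) (_ : FQ ⊣ UQ) (FA : SSet.{0} ⥤ AlgKan) (_ : FA ⊣ UA),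
        Nonempty (FQ ⋙ G ≅ FA) := by
  refine ⟨rfl, Gpd.Gfunctor, Gpd.adjGV, fun FQ adjQ FA adjA => ?_⟩
  have h : V ⋙ UQ = UA := rfl
  exact ⟨Adjunction.leftAdjointUniq (h ▸ adjQ.comp Gpd.adjGV) adjA⟩

end AlgebraicModels
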